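/- Let e₀ and e be symbols not occurring in any of the strings u₁,…,u_k, x₁,…,x_k, or v, and let w = e₀u₁e u₂e⋯u_k e e₀x₁e x₂e⋯x_k e v. Then any accepting computation of the queue automaton on w must first enqueue u₁e⋯u_k e (matching the two e₀'s), and then consume each x_i by the corresponding u_i, i.e., the computation passes through configurations u_i e⋯u_k e z₁⋯z_{i-1} ‖ x_i e⋯x_k e v for resultants z_i, ending with z₁⋯z_k ‖ v ⊢* ε‖ε. -/

import Mathlib

/-- `Shuffle u v w` : `w` is an interleaving of `u` and `v`
preserving the internal order of each. -/
inductive Shuffle {α : Type*} : List α → List α → List α → Prop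
  | nil : Shuffle [] [] []
  | left {u v w : List α} (a : α) : Shuffle u v w → Shuffle (a :: u) v (a :: w)
  | right {u v w : List α} (a : α) : Shuffle u v w → Shuffle u (a :: v) (a :: w)

/-- One step of the nondeterministic queue automaton.  A configuration is a
pair `(Q, x)` of queue contents and remaining input. -/
inductive QStep {α : Type*} : List α × List α → List α × List α → Prop
  | enq (Q x : List α) (σ : α) : QStep (Q, σ :: x) (Q ++ [σ], x)
  | deq (Q x : List α) (σ : α) : QStep (σ :: Q, σ :: x) (Q, x)

/-- `Consumes u x z` : the input word `x` is consumed by the queue word `u`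
with resultant `z`.  Each symbol of `x` is, in order, either matched against
the current front symbol of the queue word `u` (case `mtch`) or enqueued,
becoming part of the resultant `z` (case `push`); at the end all of `u` has
been matched and dequeued.  This is exactly the paper's notion
`u₁u₂u₃‖x₁x₂x₃ ⊢* u₂u₃z₁‖x₂x₃ ⊢* u₃z₁z₂‖x₃` of `x₂` being consumed by `u₂`
with resultant `z₂`. -/
inductive Consumes {α : Type*} : List α → List α → List α → Prop
  | nil : Consumes [] [] []
  | mtch {u x z : List α} (a : α) : Consumes u x z → Consumes (a :: u) (a :: x) z
  | push {u x z : List α} (a : α) : Consumes u x z → Consumes u (a :: x) (a :: z)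

section Aux

variable {α : Type*}

private lemma qstep_inv {Q t : List α} {a : α} {c : List α × List α}
    (h : QStep (Q, a :: t) c) :
    c = (Q ++ [a], t) ∨ ∃ Q', Q = a :: Q' ∧ c = (Q', t) := by
  cases h with
  | enq Q x σ => exact Or.inl rfl
  | deq Q x σ => exact Or.inr ⟨Q, rfl, rfl⟩

private lemma run_count [DecidableEq α] :
    ∀ (x Q : List α), Relation.ReflTransGen QStep (Q, x) (([] : List α), ([] : List α)) →
      ∀ a, Q.count a ≤ x.count a := by
  intro x
  induction x with
  | nil =>
    intro Q h a
    rcases h.cases_head with heq | ⟨c, hstep, _⟩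
    · simp only [Prod.mk.injEq] at heq
      simp [heq.1]
    · cases hstep
  | cons b x ih =>
    intro Q h a
    rcases h.cases_head with heq | ⟨c, hstep, hrest⟩
    · simp at heq
    · rcases qstep_inv hstep with rfl | ⟨Q', rfl, rfl⟩
      · have := ih (Q ++ [b]) hrest a
        simp only [List.count_append, List.count_cons] at this ⊢
        omega
      · have := ih Q' hrest a
        simp only [List.count_cons]
        omega

private lemma consumes_mem {u x z : List α} (h : Consumes u x z) : ∀ a ∈ z, a ∈ x := by
  induction h with
  | nil => simp
  | mtch a _ ih => intro b hb; exact List.mem_cons_of_mem _ (ih b hb)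
  | push a _ ih =>
    intro b hb
    rcases List.mem_cons.1 hb with h | h
    · simp [h]
    · exact List.mem_cons_of_mem _ (ih b h)

/-- Key single-block lemma: consuming `x` against queue `u ++ e :: R`. -/
private lemma key [DecidableEq α] (e : α) :
    ∀ (x u R S : List α), e ∉ u → e ∉ x → S.count e ≤ R.count e →
      Relation.ReflTransGen QStep (u ++ e :: R, x ++ e :: S) (([] : List α), []) →
      ∃ z, Consumes u x z ∧
        Relation.ReflTransGen QStep (R ++ z, S) (([] : List α), []) := by
  intro x
  induction x with
  | nil =>
    intro u R S hu _ hcnt hrun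
    simp only [List.nil_append] at hrun
    rcases hrun.cases_head with heq | ⟨c, hstep, hrest⟩
    · simp at heq
    · rcases qstep_inv hstep with rfl | ⟨Q', hQ, rfl⟩
      · -- enqueue the `e` : contradiction with counting
        exfalso
        have hc := run_count _ _ hrest e
        simp only [List.count_append, List.count_cons] at hc
        simp [List.count_eq_zero.mpr hu] at hc
        omega
      · cases u with
        | nil =>
          simp only [List.nil_append] at hQ
          injection hQ with _ h2
          subst h2
          exact ⟨[], Consumes.nil, by simpa using hrest⟩
        | cons b u' =>
          exfalso
          simp only [List.cons_append] at hQ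
          injection hQ with h1 _
          exact hu (h1 ▸ (List.mem_cons_self (a := b) (l := u')))
  | cons a x ih =>
    intro u R S hu hx hcnt hrun
    have hae : a ≠ e := fun h => hx (h ▸ (List.mem_cons_self (a := a) (l := x)))
    have hx' : e ∉ x := fun h => hx (List.mem_cons_of_mem _ h)
    simp only [List.cons_append] at hrun
    rcases hrun.cases_head with heq | ⟨c, hstep, hrest⟩
    · simp at heq
    · rcases qstep_inv hstep with rfl | ⟨Q', hQ, rfl⟩
      · -- `a` is enqueued
        have hrest' : Relation.ReflTransGen QStep (u ++ e :: (R ++ [a]), x ++ e :: S)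
            (([] : List α), []) := by
          have h : (u ++ e :: R) ++ [a] = u ++ e :: (R ++ [a]) := by simp
          rwa [h] at hrest
        have hcnt' : S.count e ≤ (R ++ [a]).count e := by
          simp only [List.count_append]
          omega
        obtain ⟨z, hcz, hrz⟩ := ih u (R ++ [a]) S hu hx' hcnt' hrest'
        refine ⟨a :: z, Consumes.push a hcz, ?_⟩
        have h : (R ++ [a]) ++ z = R ++ a :: z := by simp
        rwa [h] at hrz
      · -- `a` is matched against the queue front
        cases u with
        | nil =>
          exfalso
          simp only [List.nil_append] at hQ
          injection hQ with h1 _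
          exact hae h1.symm
        | cons b u' =>
          simp only [List.cons_append] at hQ
          injection hQ with h1 h2
          subst h1
          subst h2
          have hu' : e ∉ u' := fun h => hu (List.mem_cons_of_mem _ h)
          obtain ⟨z, hcz, hrz⟩ := ih u' R S hu' hx' hcnt hrest
          exact ⟨z, Consumes.mtch _ hcz, hrz⟩

private lemma count_join [DecidableEq α] (e : α) :
    ∀ (us : List (List α)), (∀ u ∈ us, e ∉ u) →
      ((us.map (fun u => u ++ [e])).flatten).count e = us.length := by
  intro us
  induction us with
  | nil => intro _; simp
  | cons u us ih =>
    intro h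
    simp only [List.map_cons, List.flatten_cons, List.count_append, List.length_cons]
    rw [ih (fun w hw => h w (List.mem_cons_of_mem _ hw))]
    simp [List.count_eq_zero.mpr (h u ((List.mem_cons_self (a := u) (l := us))))]
    omega

private lemma blocks [DecidableEq α] (e : α) :
    ∀ (us xs : List (List α)) (Z v : List α),
      us.length = xs.length →
      (∀ u ∈ us, e ∉ u) → (∀ x ∈ xs, e ∉ x) → e ∉ Z → e ∉ v →
      Relation.ReflTransGen QStep ((us.map (fun u => u ++ [e])).flatten ++ Z,
          (xs.map (fun x => x ++ [e])).flatten ++ v) (([] : List α), []) →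
      ∃ zs : List (List α), zs.length = us.length ∧
        (∀ i (h₁ : i < us.length) (h₂ : i < xs.length) (h₃ : i < zs.length),
          Consumes (us[i]'h₁) (xs[i]'h₂) (zs[i]'h₃)) ∧
        Relation.ReflTransGen QStep (Z ++ zs.flatten, v) (([] : List α), []) := by
  intro us
  induction us with
  | nil =>
    intro xs Z v hlen _ _ _ _ hrun
    obtain rfl : xs = [] := List.length_eq_zero_iff.mp hlen.symm
    refine ⟨[], rfl, ?_, by simpa using hrun⟩
    intro i h₁ _ _
    exact absurd h₁ (by simp)
  | cons u us ih =>
    intro xs Z v hlen hus hxs hZ hv hrun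
    cases xs with
    | nil => simp at hlen
    | cons x xs =>
      have hlen' : us.length = xs.length := by simpa using hlen
      have hu : e ∉ u := hus u ((List.mem_cons_self (a := u) (l := us)))
      have hx : e ∉ x := hxs x ((List.mem_cons_self (a := x) (l := xs)))
      have hus' : ∀ w ∈ us, e ∉ w := fun w hw => hus w (List.mem_cons_of_mem _ hw)
      have hxs' : ∀ w ∈ xs, e ∉ w := fun w hw => hxs w (List.mem_cons_of_mem _ hw)
      set Ju := (us.map (fun u => u ++ [e])).flatten with hJu
      set Jx := (xs.map (fun x => x ++ [e])).flatten with hJx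
      have hrun' : Relation.ReflTransGen QStep (u ++ e :: (Ju ++ Z), x ++ e :: (Jx ++ v))
          (([] : List α), []) := by
        have h1 : ((u :: us).map (fun u => u ++ [e])).flatten ++ Z = u ++ e :: (Ju ++ Z) := by
          simp [hJu]
        have h2 : ((x :: xs).map (fun x => x ++ [e])).flatten ++ v = x ++ e :: (Jx ++ v) := by
          simp [hJx]
        rwa [h1, h2] at hrun
      have hcnt : (Jx ++ v).count e ≤ (Ju ++ Z).count e := by
        simp only [List.count_append]
        rw [count_join e us hus', count_join e xs hxs',
          List.count_eq_zero.mpr hZ, List.count_eq_zero.mpr hv, hlen']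
      obtain ⟨z, hcz, hrz⟩ := key e x u (Ju ++ Z) (Jx ++ v) hu hx hcnt hrun'
      have hez : e ∉ z := fun h => hx (consumes_mem hcz e h)
      have hrz' : Relation.ReflTransGen QStep (Ju ++ (Z ++ z), Jx ++ v)
          (([] : List α), []) := by rwa [← List.append_assoc]
      have hZz : e ∉ Z ++ z := by
        simp only [List.mem_append]
        rintro (h | h)
        exacts [hZ h, hez h]
      obtain ⟨zs, hlz, hcons, hrun3⟩ := ih xs (Z ++ z) v hlen' hus' hxs' hZz hv hrz'
      refine ⟨z :: zs, by simpa using hlz, ?_, ?_⟩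
      · intro i h₁ h₂ h₃
        cases i with
        | zero => simpa using hcz
        | succ n =>
          simp only [List.getElem_cons_succ]
          exact hcons n (by simpa using h₁) (by simpa using h₂) (by simpa using h₃)
      · have h : Z ++ (z :: zs).flatten = (Z ++ z) ++ zs.flatten := by simp
        rw [h]
        exact hrun3

private lemma pushAll (e₀ : α) :
    ∀ (y Q t : List α), e₀ ∉ y →
      Relation.ReflTransGen QStep (e₀ :: Q, y ++ t) (([] : List α), []) →
      Relation.ReflTransGen QStep (e₀ :: (Q ++ y), t) (([] : List α), []) := by
  intro y
  induction y with
  | nil => intro Q t _ h; simpa using h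
  | cons a y ih =>
    intro Q t hy h
    have hae : a ≠ e₀ := fun hh => hy (hh ▸ (List.mem_cons_self (a := a) (l := y)))
    have hy' : e₀ ∉ y := fun hh => hy (List.mem_cons_of_mem _ hh)
    simp only [List.cons_append] at h
    rcases h.cases_head with heq | ⟨c, hstep, hrest⟩
    · simp at heq
    · rcases qstep_inv hstep with rfl | ⟨Q', hQ, rfl⟩
      · have hrest' : Relation.ReflTransGen QStep (e₀ :: (Q ++ [a]), y ++ t)
            (([] : List α), []) := by
          have hh : (e₀ :: Q) ++ [a] = e₀ :: (Q ++ [a]) := by simp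
          rwa [hh] at hrest
        have := ih (Q ++ [a]) t hy' hrest'
        rwa [List.append_assoc] at this
      · exfalso
        injection hQ with h1 _
        exact hae h1.symm

end Aux

/-- for `w = e₀u₁e⋯u_k e e₀ x₁e⋯x_k e v` with `e₀, e` fresh,
any accepting computation consumes each `x_i` by the corresponding `u_i`,
with some resultant `z_i`, and then accepts from configuration
`z₁⋯z_k ‖ v`. -/
theorem accepting_forces_blockwise_consumption {α : Type*}
    (e₀ e : α) (us xs : List (List α)) (v : List α)
    (hlen : us.length = xs.length)
    (hne : e₀ ≠ e)
    (hus : ∀ u ∈ us, e₀ ∉ u ∧ e ∉ u)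
    (hxs : ∀ x ∈ xs, e₀ ∉ x ∧ e ∉ x)
    (hv : e₀ ∉ v ∧ e ∉ v)
    (hacc : Relation.ReflTransGen QStep
      (([] : List α),
        e₀ :: ((us.map (fun u => u ++ [e])).flatten) ++
        e₀ :: ((xs.map (fun x => x ++ [e])).flatten) ++ v)
      (([] : List α), [])) :
    ∃ zs : List (List α), zs.length = us.length ∧
      (∀ i (h₁ : i < us.length) (h₂ : i < xs.length) (h₃ : i < zs.length),
        Consumes (us[i]'h₁) (xs[i]'h₂) (zs[i]'h₃)) ∧
      Relation.ReflTransGen QStep (zs.flatten, v) (([] : List α), []) := by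
  classical
  set U := (us.map (fun u => u ++ [e])).flatten with hU
  set X := (xs.map (fun x => x ++ [e])).flatten with hX
  have he₀U : e₀ ∉ U := by
    simp only [hU, List.mem_flatten, List.mem_map, not_exists]
    rintro l ⟨⟨w, hw, rfl⟩, hl⟩
    rcases List.mem_append.1 hl with h | h
    · exact (hus w hw).1 h
    · simp at h; exact hne h
  have he₀X : e₀ ∉ X := by
    simp only [hX, List.mem_flatten, List.mem_map, not_exists]
    rintro l ⟨⟨w, hw, rfl⟩, hl⟩
    rcases List.mem_append.1 hl with h | h
    · exact (hxs w hw).1 h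
    · simp at h; exact hne h
  -- normalize the input word
  have hacc' : Relation.ReflTransGen QStep
      (([] : List α), e₀ :: (U ++ (e₀ :: (X ++ v)))) (([] : List α), []) := by
    have : e₀ :: U ++ e₀ :: X ++ v = e₀ :: (U ++ (e₀ :: (X ++ v))) := by simp
    rwa [this] at hacc
  -- first step: must enqueue e₀
  rcases hacc'.cases_head with heq | ⟨c, hstep, hrest⟩
  · simp at heq
  · rcases qstep_inv hstep with rfl | ⟨Q', hQ, rfl⟩
    swap
    · exact absurd hQ (by simp)
    -- push all of U
    have h2 : Relation.ReflTransGen QStep (e₀ :: ([] ++ U), e₀ :: (X ++ v))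
        (([] : List α), []) := pushAll e₀ U [] (e₀ :: (X ++ v)) he₀U (by simpa using hrest)
    simp only [List.nil_append] at h2
    -- next step: must dequeue e₀
    rcases h2.cases_head with heq | ⟨c, hstep2, hrest2⟩
    · simp at heq
    · rcases qstep_inv hstep2 with rfl | ⟨Q', hQ, rfl⟩
      · -- enqueue e₀ : contradiction by counting
        exfalso
        have hc := run_count _ _ hrest2 e₀
        simp only [List.count_append, List.count_cons] at hc
        simp [List.count_eq_zero.mpr he₀U, List.count_eq_zero.mpr he₀X,
          List.count_eq_zero.mpr hv.1] at hc
      · obtain rfl : Q' = U := by injection hQ with _ h2; exact h2.symm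
        -- now apply the block lemma with Z = []
        have hrun : Relation.ReflTransGen QStep (U ++ [], X ++ v) (([] : List α), []) := by
          simpa using hrest2
        obtain ⟨zs, hlz, hcons, hfin⟩ := blocks e us xs [] v hlen
          (fun u hu => (hus u hu).2) (fun x hx => (hxs x hx).2) (by simp) hv.2 hrun
        exact ⟨zs, hlz, hcons, by simpa using hfin⟩
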